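/- arXiv:2405.13836 — 2 statements merged into one kernel-verified Lean document; each statement's English description precedes it below -/
import Mathlib

section
/- Let f, g : X → Y be continuous maps between compact metric ANR spaces and let A ⊆ X be a subset. If the restrictions f|_A and g|_A are homotopic, then there exists an open set U with A ⊆ U ⊆ X such that f|_U and g|_U are homotopic. -/
universe u v w

/-- A metrizable space `Y` is an ANR if for every metrizable space `W`, every closed
subset `C ⊆ W` and every continuous map `g : C → Y`, there exist an open set `U` with
`C ⊆ U ⊆ W` and a continuous map `G : U → Y` extending `g`. -/
def IsANR (Y : Type v) [TopologicalSpace Y] : Prop :=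
  TopologicalSpace.MetrizableSpace Y ∧
  ∀ (W : Type w) [TopologicalSpace W] [TopologicalSpace.MetrizableSpace W]
    (C : Set W), IsClosed C → ∀ g : C(C, Y),
    ∃ U : Set W, IsOpen U ∧ C ⊆ U ∧
      ∃ G : C(U, Y), ∀ (w : W) (hC : w ∈ C) (hU : w ∈ U), G ⟨w, hU⟩ = g ⟨w, hC⟩

set_option synthInstance.maxHeartbeats 1000000
set_option maxHeartbeats 1000000

open Metric Set TopologicalSpace unitInterval


local notation "ℓinf" => lp (fun _ : ℕ => ℝ) ⊤

/-- From the ANR property, a compact metric space is a neighborhood retract of `ℓ^∞`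
(via the Kuratowski embedding). -/
theorem exists_nbhd_retract (Y : Type v) [MetricSpace Y] [CompactSpace Y]
    (hY : IsANR.{v, w} Y) :
    ∃ M : Set ℓinf, IsOpen M ∧ (∀ y, kuratowskiEmbedding Y y ∈ M) ∧
      ∃ s : C(M, Y), ∀ y (h : kuratowskiEmbedding Y y ∈ M), s ⟨kuratowskiEmbedding Y y, h⟩ = y := by
  set j := kuratowskiEmbedding Y with hjdef
  have hj : Isometry j := kuratowskiEmbedding.isometry Y
  let e : ULift.{w} ℓinf ≃ₜ ℓinf := Homeomorph.ulift
  let C : Set (ULift.{w} ℓinf) := e ⁻¹' (Set.range j)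
  have hCclosed : IsClosed C :=
    ((isCompact_range hj.continuous).isClosed).preimage e.continuous
  let φ : Y ≃ₜ Set.range j := hj.isEmbedding.toHomeomorph
  let g0 : C(C, Y) := ⟨fun c => φ.symm ⟨e c.1, c.2⟩,
    φ.symm.continuous.comp ((e.continuous.comp continuous_subtype_val).subtype_mk _)⟩
  obtain ⟨M', hM'open, hCM', G, hG⟩ :=
    hY.2 (ULift.{w} ℓinf) C hCclosed g0
  refine ⟨e.symm ⁻¹' M', hM'open.preimage e.symm.continuous, ?_, ?_⟩
  · intro y
    have : e.symm (j y) ∈ C := by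
      simp only [C, Set.mem_preimage, Homeomorph.apply_symm_apply]
      exact ⟨y, rfl⟩
    exact hCM' this
  · refine ⟨⟨fun z => G ⟨e.symm z.1, z.2⟩,
      G.continuous.comp ((e.symm.continuous.comp continuous_subtype_val).subtype_mk _)⟩, ?_⟩
    intro y h
    have hC : e.symm (j y) ∈ C := by
      simp only [C, Set.mem_preimage, Homeomorph.apply_symm_apply]
      exact ⟨y, rfl⟩
    have := hG (e.symm (j y)) hC h
    simp only [ContinuousMap.coe_mk, this, g0]
    have h1 : (⟨e (e.symm (j y)), hC⟩ : Set.range j) = ⟨j y, ⟨y, rfl⟩⟩ :=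
      Subtype.ext (e.apply_symm_apply _)
    rw [h1]
    have : φ y = (⟨j y, ⟨y, rfl⟩⟩ : Set.range j) := rfl
    rw [← this, Homeomorph.symm_apply_apply]


/-- Main gluing construction: if `Y` embeds isometrically in a normed space `E` with a
retraction `s` of a `δ`-neighborhood `M`, and `f, g : X → Y` are homotopic on `A`, then they
are homotopic on an open neighborhood of `A`. -/
theorem glue_construction {X : Type*} {Y : Type*} {E : Type*} [MetricSpace X] [MetricSpace Y]
    [NormedAddCommGroup E] [NormedSpace ℝ E]
    (f g : C(X, Y)) (A : Set X) (H : (f.restrict A).Homotopy (g.restrict A))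
    (j : Y → E) (hj : Isometry j)
    (M : Set E) (hM : IsOpen M) (s : C(M, Y))
    (hs : ∀ y (h : j y ∈ M), s ⟨j y, h⟩ = y)
    (δ : ℝ) (hδ : 0 < δ) (hMδ : Metric.thickening δ (Set.range j) ⊆ M) :
    ∃ U : Set X, IsOpen U ∧ A ⊆ U ∧ (f.restrict U).Homotopic (g.restrict U) := by
  classical
  -- the curried homotopy, as a continuous family of paths in `E`
  let jc : C(Y, E) := ⟨j, hj.continuous⟩
  let Φ : C(A, C(I, E)) := ((jc.comp H.toContinuousMap).comp ContinuousMap.prodSwap).curry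
  have hΦ : ∀ (a : A) (τ : I), Φ a τ = j (H (τ, a)) := fun _ _ => rfl
  -- choice of radii
  have key : ∀ a : A, ∃ r : ℝ, 0 < r ∧
      (∀ x : X, dist x a.1 < r → dist (f x) (f a.1) < δ/4 ∧ dist (g x) (g a.1) < δ/4) ∧
      (∀ a' : A, dist a'.1 a.1 < 2*r → dist (Φ a') (Φ a) ≤ δ/4) := by
    intro a
    have hδ4 : 0 < δ/4 := by linarith
    obtain ⟨r1, hr1pos, hr1⟩ := Metric.continuousAt_iff.1 (f.continuous.continuousAt (x := a.1)) _ hδ4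
    obtain ⟨r2, hr2pos, hr2⟩ := Metric.continuousAt_iff.1 (g.continuous.continuousAt (x := a.1)) _ hδ4
    obtain ⟨r3, hr3pos, hr3⟩ := Metric.continuousAt_iff.1 (Φ.continuous.continuousAt (x := a)) _ hδ4
    refine ⟨min (min r1 r2) (r3/2), by positivity, ?_, ?_⟩
    · intro x hx
      constructor
      · exact hr1 (lt_of_lt_of_le hx ((min_le_left _ _).trans (min_le_left _ _)))
      · exact hr2 (lt_of_lt_of_le hx ((min_le_left _ _).trans (min_le_right _ _)))
    · intro a' ha'
      have : dist a' a < r3 := by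
        rw [Subtype.dist_eq]
        have : 2 * min (min r1 r2) (r3/2) ≤ r3 := by
          have := min_le_right (min r1 r2) (r3/2); linarith
        linarith
      exact (hr3 this).le
  choose ρ hρpos hρfg hρΦ using key
  -- the open set
  refine ⟨⋃ a : A, ball a.1 (ρ a), isOpen_iUnion fun a => isOpen_ball, ?_, ?_⟩
  · intro x hx
    exact mem_iUnion.2 ⟨⟨x, hx⟩, mem_ball_self (hρpos _)⟩
  set U : Set X := ⋃ a : A, ball a.1 (ρ a) with hUdef
  -- partition of unity on U subordinate to the balls
  obtain ⟨p, hp⟩ := PartitionOfUnity.exists_isSubordinate (s := (univ : Set U))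
    isClosed_univ (fun a : A => (Subtype.val ⁻¹' ball a.1 (ρ a) : Set U))
    (fun a => (isOpen_ball).preimage continuous_subtype_val)
    (by
      rintro ⟨x, hx⟩ -
      obtain ⟨a, ha⟩ := mem_iUnion.1 hx
      exact mem_iUnion.2 ⟨a, ha⟩)
  -- time reparametrizations
  let lam : I → ℝ := fun t => min 1 (max 0 (4*(t:ℝ)))
  let mu : I → ℝ := fun t => min 1 (max 0 (4*(t:ℝ) - 3))
  let tau : I → I := fun t => Set.projIcc 0 1 zero_le_one (2*(t:ℝ) - 1/2)
  have hlam_cont : Continuous lam := by fun_prop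
  have hmu_cont : Continuous mu := by fun_prop
  have htau_cont : Continuous tau := by
    exact continuous_projIcc.comp (by fun_prop)
  have hlam01 : ∀ t, 0 ≤ lam t ∧ lam t ≤ 1 := fun t =>
    ⟨le_min zero_le_one (le_max_left _ _), min_le_left _ _⟩
  have hmu01 : ∀ t, 0 ≤ mu t ∧ mu t ≤ 1 := fun t =>
    ⟨le_min zero_le_one (le_max_left _ _), min_le_left _ _⟩
  have hmulam : ∀ t, mu t ≤ lam t := by
    intro t
    refine min_le_min le_rfl (max_le_max le_rfl ?_)
    linarith
  -- the main map into E
  let L : I × U → E := fun q =>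
    (1 - lam q.1) • j (f q.2.1) + mu q.1 • j (g q.2.1) +
      ∑ᶠ a : A, ((lam q.1 - mu q.1) * p a q.2) • (Φ a) (tau q.1)
  have hL_cont : Continuous L := by
    refine Continuous.add (Continuous.add ?_ ?_) ?_
    · exact ((continuous_const.sub (hlam_cont.comp continuous_fst)).smul
        (hj.continuous.comp (f.continuous.comp (continuous_subtype_val.comp continuous_snd))))
    · exact ((hmu_cont.comp continuous_fst).smul
        (hj.continuous.comp (g.continuous.comp (continuous_subtype_val.comp continuous_snd))))
    · refine continuous_finsum (fun a => ?_) ?_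
      · exact (((hlam_cont.comp continuous_fst).sub (hmu_cont.comp continuous_fst)).mul
          ((p a).continuous.comp continuous_snd)).smul
          ((Φ a).continuous.comp (htau_cont.comp continuous_fst))
      · intro q
        obtain ⟨N, hN, hfin⟩ := p.locallyFinite q.2
        refine ⟨(univ : Set I) ×ˢ N, ?_, ?_⟩
        · have := prod_mem_nhds (Filter.univ_mem : (univ : Set I) ∈ nhds q.1) hN
          simpa using this
        · refine hfin.subset ?_
          rintro a ⟨⟨t', x'⟩, h1, h2⟩
          refine ⟨x', ?_, h2.2⟩
          simp only [Function.mem_support] at h1 ⊢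
          intro hc
          exact h1 (by simp [hc])
  -- finite support structure at a point
  have main : ∀ q : I × U, ∃ c₀ ∈ Set.range j, dist (L q) c₀ ≤ δ/4 := by
    rintro ⟨t, x⟩
    have hfin : {a : A | p a x ≠ 0}.Finite := by
      have h := p.locallyFinite.point_finite x
      simpa [Function.mem_support] using h
    set T : Finset A := hfin.toFinset with hTdef
    have hmemT : ∀ a : A, a ∈ T ↔ p a x ≠ 0 := by
      intro a; simp [hTdef, Set.Finite.mem_toFinset]
    have hsum : ∑ a ∈ T, p a x = 1 := by
      rw [← finsum_eq_sum_of_support_subset (fun a : A => p a x)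
        (by intro a ha; simpa [hmemT] using ha)]
      exact p.sum_eq_one (mem_univ x)
    have hTne : T.Nonempty := by
      by_contra h
      rw [Finset.not_nonempty_iff_eq_empty] at h
      rw [h, Finset.sum_empty] at hsum
      exact one_ne_zero hsum.symm
    obtain ⟨a₀, ha₀T, ha₀max⟩ := T.exists_max_image ρ hTne
    have hball : ∀ a : A, p a x ≠ 0 → dist x.1 a.1 < ρ a := by
      intro a ha
      have hx : x ∈ Subtype.val ⁻¹' ball a.1 (ρ a) :=
        hp a (subset_tsupport _ (Function.mem_support.2 ha))
      exact mem_ball.1 hx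
    have ha₀x : dist x.1 a₀.1 < ρ a₀ := hball a₀ ((hmemT a₀).1 ha₀T)
    refine ⟨Φ a₀ (tau t), ⟨H (tau t, a₀), (hΦ _ _).symm⟩, ?_⟩
    set c₀ := Φ a₀ (tau t) with hc₀def
    -- rewrite finsum as a finset sum
    have hLrw : L (t, x) = (1 - lam t) • j (f x.1) + mu t • j (g x.1) +
        ∑ a ∈ T, ((lam t - mu t) * p a x) • (Φ a) (tau t) := by
      have : ∑ᶠ a : A, ((lam t - mu t) * p a x) • (Φ a) (tau t)
          = ∑ a ∈ T, ((lam t - mu t) * p a x) • (Φ a) (tau t) := by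
        refine finsum_eq_sum_of_support_subset _ ?_
        intro a ha
        have : p a x ≠ 0 := by
          intro hc
          apply ha
          simp [hc]
        simpa [hmemT] using this
      simp only [L, this]
    -- the difference identity
    have hdiff : L (t, x) - c₀ = (1 - lam t) • (j (f x.1) - c₀) + mu t • (j (g x.1) - c₀) +
        ∑ a ∈ T, ((lam t - mu t) * p a x) • ((Φ a) (tau t) - c₀) := by
      have h1 : ∑ a ∈ T, ((lam t - mu t) * p a x) • ((Φ a) (tau t) - c₀)
          = (∑ a ∈ T, ((lam t - mu t) * p a x) • (Φ a) (tau t)) - (lam t - mu t) • c₀ := by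
        simp only [smul_sub]
        rw [Finset.sum_sub_distrib]
        congr 1
        rw [← Finset.sum_smul, ← Finset.mul_sum, hsum, mul_one]
      rw [hLrw, h1]
      module
    -- bounds on the three terms
    have hpairwise : ∀ a : A, a ∈ T → ‖(Φ a) (tau t) - c₀‖ ≤ δ/4 := by
      intro a haT
      have hax : dist x.1 a.1 < ρ a := hball a ((hmemT a).1 haT)
      have haa₀ : dist a.1 a₀.1 < 2 * ρ a₀ := by
        have h1 : dist a.1 a₀.1 ≤ dist a.1 x.1 + dist x.1 a₀.1 := dist_triangle _ _ _
        have h2 : dist a.1 x.1 = dist x.1 a.1 := dist_comm _ _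
        have h3 : ρ a ≤ ρ a₀ := ha₀max a haT
        linarith
      have hd : dist (Φ a) (Φ a₀) ≤ δ/4 := hρΦ a₀ a haa₀
      calc ‖(Φ a) (tau t) - c₀‖ = dist ((Φ a) (tau t)) ((Φ a₀) (tau t)) := by
            rw [hc₀def, dist_eq_norm]
        _ ≤ dist (Φ a) (Φ a₀) := ContinuousMap.dist_apply_le_dist _
        _ ≤ δ/4 := hd
    have hb3 : ‖∑ a ∈ T, ((lam t - mu t) * p a x) • ((Φ a) (tau t) - c₀)‖
        ≤ (lam t - mu t) * (δ/4) := by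
      calc ‖∑ a ∈ T, ((lam t - mu t) * p a x) • ((Φ a) (tau t) - c₀)‖
          ≤ ∑ a ∈ T, ‖((lam t - mu t) * p a x) • ((Φ a) (tau t) - c₀)‖ := norm_sum_le _ _
        _ ≤ ∑ a ∈ T, (lam t - mu t) * p a x * (δ/4) := by
            refine Finset.sum_le_sum fun a haT => ?_
            rw [norm_smul]
            have hnn : 0 ≤ (lam t - mu t) * p a x :=
              mul_nonneg (by linarith [hmulam t]) (p.nonneg a x)
            rw [Real.norm_eq_abs, abs_of_nonneg hnn]
            exact mul_le_mul_of_nonneg_left (hpairwise a haT) hnn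
        _ = (lam t - mu t) * (δ/4) := by
            rw [← Finset.sum_mul, ← Finset.mul_sum, hsum, mul_one]
    have hb1 : ‖(1 - lam t) • (j (f x.1) - c₀)‖ ≤ (1 - lam t) * (δ/4) := by
      rcases eq_or_lt_of_le (hlam01 t).2 with h | h
      · rw [← h]
        simp
      · have ht : (t : ℝ) < 1/4 := by
          by_contra hc
          push_neg at hc
          have h4 : (1:ℝ) ≤ max 0 (4*(t:ℝ)) := le_max_of_le_right (by linarith)
          have : lam t = 1 := min_eq_left h4
          rw [this] at h
          exact lt_irrefl _ h
        have htau : tau t = 0 := by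
          have h0 : 2*(t:ℝ) - 1/2 ≤ 0 := by linarith
          simp only [tau]
          rw [Set.projIcc_of_le_left _ h0]
          rfl
        have hc₀ : c₀ = j (f a₀.1) := by
          rw [hc₀def, htau, hΦ]
          congr 1
          have := H.apply_zero a₀
          rw [this]
          rfl
        rw [hc₀, norm_smul, Real.norm_eq_abs, abs_of_nonneg (by linarith [(hlam01 t).2] : (0:ℝ) ≤ 1 - lam t)]
        have hdist : ‖j (f x.1) - j (f a₀.1)‖ ≤ δ/4 := by
          rw [← dist_eq_norm, hj.dist_eq]
          exact ((hρfg a₀ x.1 ha₀x).1).le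
        exact mul_le_mul_of_nonneg_left hdist (by linarith [(hlam01 t).2])
    have hb2 : ‖mu t • (j (g x.1) - c₀)‖ ≤ mu t * (δ/4) := by
      rcases eq_or_lt_of_le (hmu01 t).1 with h | h
      · rw [← h]
        simp
      · have ht : (3:ℝ)/4 < (t : ℝ) := by
          by_contra hc
          push_neg at hc
          have : mu t = 0 := by
            have h4 : max 0 (4*(t:ℝ) - 3) = 0 := max_eq_left (by linarith)
            simp only [mu, h4]
            exact min_eq_right zero_le_one
          rw [this] at h
          exact lt_irrefl _ h
        have htau : tau t = 1 := by
          have h0 : (1:ℝ) ≤ 2*(t:ℝ) - 1/2 := by linarith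
          simp only [tau]
          rw [Set.projIcc_of_right_le _ h0]
          rfl
        have hc₀ : c₀ = j (g a₀.1) := by
          rw [hc₀def, htau, hΦ]
          congr 1
          have := H.apply_one a₀
          rw [this]
          rfl
        rw [hc₀, norm_smul, Real.norm_eq_abs, abs_of_nonneg (hmu01 t).1]
        have hdist : ‖j (g x.1) - j (g a₀.1)‖ ≤ δ/4 := by
          rw [← dist_eq_norm, hj.dist_eq]
          exact ((hρfg a₀ x.1 ha₀x).2).le
        exact mul_le_mul_of_nonneg_left hdist (hmu01 t).1
    calc dist (L (t, x)) c₀ = ‖L (t, x) - c₀‖ := dist_eq_norm _ _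
      _ = ‖(1 - lam t) • (j (f x.1) - c₀) + mu t • (j (g x.1) - c₀) +
          ∑ a ∈ T, ((lam t - mu t) * p a x) • ((Φ a) (tau t) - c₀)‖ := by rw [hdiff]
      _ ≤ ‖(1 - lam t) • (j (f x.1) - c₀)‖ + ‖mu t • (j (g x.1) - c₀)‖ +
          ‖∑ a ∈ T, ((lam t - mu t) * p a x) • ((Φ a) (tau t) - c₀)‖ := norm_add₃_le
      _ ≤ (1 - lam t) * (δ/4) + mu t * (δ/4) + (lam t - mu t) * (δ/4) :=
          add_le_add (add_le_add hb1 hb2) hb3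
      _ = δ/4 := by ring
  have hLM : ∀ q : I × U, L q ∈ M := by
    intro q
    obtain ⟨c₀, hc₀, hd⟩ := main q
    exact hMδ (Metric.mem_thickening_iff.2 ⟨c₀, hc₀, by linarith⟩)
  -- endpoints
  have hL0 : ∀ x : U, L (0, x) = j (f x.1) := by
    intro x
    have hl : lam 0 = 0 := by
      simp only [lam]
      norm_num [show ((0:I):ℝ) = 0 from rfl]
    have hm : mu 0 = 0 := by
      simp only [mu]
      norm_num [show ((0:I):ℝ) = 0 from rfl]
    simp only [L, hl, hm]
    simp
  have hL1 : ∀ x : U, L (1, x) = j (g x.1) := by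
    intro x
    have hl : lam 1 = 1 := by
      simp only [lam]
      norm_num [show ((1:I):ℝ) = 1 from rfl]
    have hm : mu 1 = 1 := by
      simp only [mu]
      norm_num [show ((1:I):ℝ) = 1 from rfl]
    simp only [L, hl, hm]
    simp
  refine ⟨{ toFun := fun q => s ⟨L q, hLM q⟩
            continuous_toFun := s.continuous.comp (hL_cont.subtype_mk _)
            map_zero_left := ?_
            map_one_left := ?_ }⟩
  · intro x
    have h1 : (⟨L (0, x), hLM (0, x)⟩ : M) = ⟨j (f x.1), hL0 x ▸ hLM (0, x)⟩ :=
      Subtype.ext (hL0 x)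
    show s _ = _
    rw [h1, hs]
    rfl
  · intro x
    have h1 : (⟨L (1, x), hLM (1, x)⟩ : M) = ⟨j (g x.1), hL1 x ▸ hLM (1, x)⟩ :=
      Subtype.ext (hL1 x)
    show s _ = _
    rw [h1, hs]
    rfl

/-- If `f, g : X → Y` are maps between compact metric ANR spaces which are homotopic on a
subset `A ⊆ X`, then they are homotopic on some open neighbourhood of `A`. -/
theorem homotopic_on_open_neighborhood (X : Type u) (Y : Type v) [MetricSpace X]
    [CompactSpace X] [MetricSpace Y] [CompactSpace Y] (hX : IsANR X) (hY : IsANR Y)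
    (f g : C(X, Y)) (A : Set X) (h : (f.restrict A).Homotopic (g.restrict A)) :
    ∃ U : Set X, IsOpen U ∧ A ⊆ U ∧ (f.restrict U).Homotopic (g.restrict U) := by
  obtain ⟨H⟩ := h
  obtain ⟨M, hMopen, hjM, s, hs⟩ := exists_nbhd_retract Y hY
  have hj : Isometry (kuratowskiEmbedding Y) := kuratowskiEmbedding.isometry Y
  have hK : IsCompact (Set.range (kuratowskiEmbedding Y)) := isCompact_range hj.continuous
  have hsub : Set.range (kuratowskiEmbedding Y) ⊆ M := by
    rintro _ ⟨y, rfl⟩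
    exact hjM y
  obtain ⟨δ, hδ, hthick⟩ := hK.exists_thickening_subset_open hMopen hsub
  exact glue_construction f g A H (kuratowskiEmbedding Y) hj M hMopen s hs δ hδ hthick
end

section
/- (Pavešić) Let f : X → Y be a fibration between compact ANR spaces, with f a continuous surjection between path-connected spaces. Then tc(f) is the smallest nonnegative integer n for which X × Y admits a cover by n+1 arbitrary (not necessarily open) subsets on each of which there exists a continuous local section of π_f. -/
universe u v w

/-- A continuous map `p : E → B` is a (Hurewicz) fibration if it has the homotopy lifting
property with respect to every topological space. -/
def IsFibration {E : Type u} {B : Type v} [TopologicalSpace E] [TopologicalSpace B]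
    (p : C(E, B)) : Prop :=
  ∀ (Z : Type w) [TopologicalSpace Z] (h : C(Z, E)) (H : C(Z × unitInterval, B)),
    (∀ z, H (z, 0) = p (h z)) →
    ∃ H' : C(Z × unitInterval, E), (∀ z, H' (z, 0) = h z) ∧ ∀ q, p (H' q) = H q

/-- A subset `A ⊆ X × Y` admits a continuous local section of
`π_f : X^I → X × Y`, `α ↦ (α(0), f(α(1)))`. -/
def HasLocalSectionPi {X : Type u} {Y : Type v} [TopologicalSpace X] [TopologicalSpace Y]
    (f : C(X, Y)) (A : Set (X × Y)) : Prop :=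
  ∃ s : C(A, C(unitInterval, X)), ∀ a : A, ((s a) 0, f ((s a) 1)) = (a : X × Y)

open scoped ENat

/-- Pavešić's topological complexity of `f`: the sectional number `sn(π_f)`, i.e. the
least `n` such that there is a nested sequence of open sets
`∅ = U₀ ⊆ U₁ ⊆ ⋯ ⊆ U_{n+1} = X × Y` with each difference `U_i \ U_{i-1}` admitting a
continuous local section of `π_f`. -/
noncomputable def tcPav {X : Type u} {Y : Type v} [TopologicalSpace X]
    [TopologicalSpace Y] (f : C(X, Y)) : ℕ∞ :=
  sInf {m : ℕ∞ | ∃ n : ℕ, m = n ∧ ∃ U : Fin (n + 2) → Set (X × Y),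
    (∀ i, IsOpen (U i)) ∧ U 0 = ∅ ∧ U (Fin.last (n + 1)) = Set.univ ∧
    (∀ i j, i ≤ j → U i ⊆ U j) ∧
    ∀ i : Fin (n + 1), HasLocalSectionPi f (U i.succ \ U i.castSucc)}

/-- Restriction: a subset of a set admitting a local section admits one. -/
lemma HasLocalSectionPi.mono {X : Type u} {Y : Type v} [TopologicalSpace X]
    [TopologicalSpace Y] {f : C(X, Y)} {A B : Set (X × Y)} (h : HasLocalSectionPi f A)
    (hBA : B ⊆ A) : HasLocalSectionPi f B := by
  obtain ⟨s, hs⟩ := h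
  exact ⟨s.comp ⟨Set.inclusion hBA, continuous_inclusion hBA⟩,
    fun b => hs (Set.inclusion hBA b)⟩


open TopologicalSpace Metric

notation "L∞" => lp (fun _ : ℕ => ℝ) ⊤

set_option maxHeartbeats 3200000
set_option synthInstance.maxHeartbeats 1000000

lemma anr_package {X : Type u} [MetricSpace X] [CompactSpace X]
    (hX : IsANR.{u, wx} X) :
    ∃ (κ : X → L∞) (U : Set L∞) (G : C(U, X)),
      Isometry κ ∧ IsOpen U ∧ (∀ x, κ x ∈ U) ∧ ∀ x (h : κ x ∈ U), G ⟨κ x, h⟩ = x := by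
  classical
  have hκiso : Isometry (kuratowskiEmbedding X) := kuratowskiEmbedding.isometry X
  set κ := kuratowskiEmbedding X with hκdef
  letI : MetricSpace (ULift.{wx} L∞) := inferInstance
  set C : Set (ULift.{wx} L∞) := ULift.up '' Set.range κ with hC
  have hCcompact : IsCompact C := (isCompact_range hκiso.continuous).image continuous_uliftUp
  have hCclosed : IsClosed C := hCcompact.isClosed
  have hmem : ∀ x, (ULift.up (κ x) : ULift.{wx} L∞) ∈ C := fun x => ⟨κ x, ⟨x, rfl⟩, rfl⟩
  set e : X → C := fun x => ⟨ULift.up (κ x), hmem x⟩ with he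
  have hesurj : Function.Surjective e := by
    rintro ⟨c, ⟨l, ⟨x, rfl⟩, rfl⟩⟩; exact ⟨x, rfl⟩
  have heinj : Function.Injective e := by
    intro a b h
    exact hκiso.injective (congrArg (fun c : C => (c : ULift.{wx} L∞).down) h)
  have hecont : Continuous e := (continuous_uliftUp.comp hκiso.continuous).subtype_mk _
  let eqv : X ≃ C := Equiv.ofBijective e ⟨heinj, hesurj⟩
  let homeo : X ≃ₜ C := Continuous.homeoOfEquivCompactToT2 (f := eqv) hecont
  obtain ⟨U', hU'open, hCU', G', hG'⟩ := hX.2 (ULift.{wx} L∞) C hCclosed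
    ⟨homeo.symm, homeo.symm.continuous⟩
  have hupmem : ∀ z : ULift.down '' U', (ULift.up (z : L∞) : ULift.{wx} L∞) ∈ U' := by
    rintro ⟨z, w, hw, rfl⟩
    simpa using hw
  refine ⟨κ, ULift.down '' U',
    G'.comp ⟨fun z => ⟨ULift.up (z : L∞), hupmem z⟩,
      (continuous_uliftUp.comp continuous_subtype_val).subtype_mk _⟩,
    hκiso, (Homeomorph.ulift.isOpenMap) U' hU'open, ?_, ?_⟩
  · intro x
    exact ⟨ULift.up (κ x), hCU' (hmem x), rfl⟩
  · intro x h
    have h1 : G' ⟨ULift.up (κ x), hupmem ⟨κ x, h⟩⟩ =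
        (⟨homeo.symm, homeo.symm.continuous⟩ : C(C, X)) ⟨ULift.up (κ x), hmem x⟩ :=
      hG' (ULift.up (κ x)) (hmem x) _
    have h2 : homeo.symm ⟨ULift.up (κ x), hmem x⟩ = x := by
      have : homeo x = ⟨ULift.up (κ x), hmem x⟩ := rfl
      rw [← this, Homeomorph.symm_apply_apply]
    simpa [h2] using h1


lemma retract_modulus {X : Type u} [MetricSpace X] [CompactSpace X]
    {L : Type*} [MetricSpace L] {κ : X → L} (hκ : Isometry κ)
    {U : Set L} (hκU : ∀ x, κ x ∈ U) (G : C(U, X))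
    (hG : ∀ x (h : κ x ∈ U), G ⟨κ x, h⟩ = x) :
    ∀ δ > 0, ∃ η > 0, ∀ (x : X) (ν : L) (hν : ν ∈ U), dist ν (κ x) < η →
      dist (G ⟨ν, hν⟩) x < δ := by
  intro δ hδ
  by_contra hcon
  push_neg at hcon
  have key : ∀ n : ℕ, ∃ (x : X) (ν : L) (hν : ν ∈ U),
      dist ν (κ x) < 1/(n+1) ∧ δ ≤ dist (G ⟨ν, hν⟩) x := by
    intro n
    obtain ⟨x, ν, hν, h1, h2⟩ := hcon (1/(n+1)) (by positivity)
    exact ⟨x, ν, hν, h1, h2⟩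
  choose xs νs hνs hd1 hd2 using key
  obtain ⟨x₀, φ, hφ, hx₀⟩ := CompactSpace.tendsto_subseq xs
  have hνtend : Filter.Tendsto (fun n => νs (φ n)) Filter.atTop (nhds (κ x₀)) := by
    rw [tendsto_iff_dist_tendsto_zero]
    have hb : ∀ n, dist (νs (φ n)) (κ x₀) ≤ 1/(φ n+1) + dist (xs (φ n)) x₀ := by
      intro n
      calc dist (νs (φ n)) (κ x₀) ≤ dist (νs (φ n)) (κ (xs (φ n))) + dist (κ (xs (φ n))) (κ x₀) :=
            dist_triangle _ _ _
        _ ≤ 1/(φ n+1) + dist (xs (φ n)) x₀ := by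
            rw [hκ.dist_eq]
            exact add_le_add (le_of_lt (hd1 (φ n))) le_rfl
    refine squeeze_zero (fun n => dist_nonneg) hb ?_
    have h1 : Filter.Tendsto (fun n => 1/((φ n : ℝ)+1)) Filter.atTop (nhds 0) := by
      apply Filter.Tendsto.comp (tendsto_one_div_add_atTop_nhds_zero_nat)
      exact hφ.tendsto_atTop
    have h2 : Filter.Tendsto (fun n => dist (xs (φ n)) x₀) Filter.atTop (nhds 0) :=
      (tendsto_iff_dist_tendsto_zero).mp hx₀
    simpa using h1.add h2
  have hsub : Filter.Tendsto (fun n => (⟨νs (φ n), hνs (φ n)⟩ : U)) Filter.atTop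
      (nhds (⟨κ x₀, hκU x₀⟩ : U)) := by
    rw [tendsto_subtype_rng]
    exact hνtend
  have hGtend : Filter.Tendsto (fun n => G ⟨νs (φ n), hνs (φ n)⟩) Filter.atTop (nhds x₀) := by
    have := (G.continuous.tendsto _).comp hsub
    rwa [hG x₀ (hκU x₀)] at this
  have hdist : Filter.Tendsto (fun n => dist (G ⟨νs (φ n), hνs (φ n)⟩) (xs (φ n)))
      Filter.atTop (nhds 0) := by
    have := hGtend.dist hx₀
    simpa using this
  have : ∀ᶠ n in Filter.atTop, dist (G ⟨νs (φ n), hνs (φ n)⟩) (xs (φ n)) < δ :=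
    (hdist.eventually (gt_mem_nhds hδ))  -- maybe wrong lemma name
  obtain ⟨n, hn⟩ := this.exists
  exact absurd (hd2 (φ n)) (not_le.mpr hn)


lemma convex_est {ι : Type*} {N : Type*} [NormedAddCommGroup N] [NormedSpace ℝ N]
    (t : Finset ι) (φ : ι → ℝ) (hφ0 : ∀ i ∈ t, 0 ≤ φ i) (hsum : ∑ i ∈ t, φ i = 1)
    (x : ι → N) (x₀ : N) (c : ℝ) (hx : ∀ i ∈ t, dist (x i) x₀ ≤ c) :
    dist (∑ i ∈ t, φ i • x i) x₀ ≤ c := by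
  have hx₀ : x₀ = ∑ i ∈ t, φ i • x₀ := by rw [← Finset.sum_smul, hsum, one_smul]
  have hdiff : ∑ i ∈ t, φ i • x i - x₀ = ∑ i ∈ t, φ i • (x i - x₀) := by
    conv_lhs => rw [hx₀]
    rw [← Finset.sum_sub_distrib]
    congr 1
    ext i
    rw [smul_sub]
  rw [dist_eq_norm, hdiff]
  calc ‖∑ i ∈ t, φ i • (x i - x₀)‖ ≤ ∑ i ∈ t, ‖φ i • (x i - x₀)‖ := norm_sum_le _ _
    _ ≤ ∑ i ∈ t, φ i * c := by
        refine Finset.sum_le_sum fun i hi => ?_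
        rw [norm_smul, Real.norm_eq_abs, abs_of_nonneg (hφ0 i hi)]
        exact mul_le_mul_of_nonneg_left (by rw [← dist_eq_norm]; exact hx i hi) (hφ0 i hi)
    _ = c := by rw [← Finset.sum_mul, hsum, one_mul]


lemma compact_embed_pi (Z : Type*) [MetricSpace Z] [CompactSpace Z] [Nonempty Z] :
    ∃ Φ : Z → (ℕ → ℝ), Continuous Φ ∧ Function.Injective Φ := by
  have hsep : TopologicalSpace.SeparableSpace Z := inferInstance
  set u := TopologicalSpace.denseSeq Z with hu
  have hdense : DenseRange u := TopologicalSpace.denseRange_denseSeq Z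
  refine ⟨fun z n => dist z (u n), ?_, ?_⟩
  · exact continuous_pi fun n => continuous_id.dist continuous_const
  · intro a b hab
    have h : ∀ n, dist a (u n) = dist b (u n) := fun n => congrFun hab n
    have hd : ∀ ε > 0, dist a b < ε := by
      intro ε hε
      obtain ⟨n, hn⟩ := hdense.exists_dist_lt a (by positivity : (0:ℝ) < ε/2)
      calc dist a b ≤ dist a (u n) + dist (u n) b := dist_triangle _ _ _
        _ < ε/2 + ε/2 := by
            refine add_lt_add_of_lt_of_le hn ?_
            rw [dist_comm, ← h n]
            exact le_of_lt hn
        _ = ε := by ring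
    by_contra hne
    have : 0 < dist a b := dist_pos.mpr hne
    exact absurd (hd _ this) (lt_irrefl _)


lemma hlp_transfer {X : Type u} {Y : Type v} [TopologicalSpace X] [TopologicalSpace Y]
    (f : C(X, Y)) (hf : IsFibration.{u,v,w} f)
    {Z : Type z} [TopologicalSpace Z] {M : Type} [TopologicalSpace M] (θ : Z ≃ₜ M)
    (h : C(Z, X)) (H : C(Z × unitInterval, Y)) (hH : ∀ z, H (z, 0) = f (h z)) :
    ∃ H' : C(Z × unitInterval, X), (∀ z, H' (z, 0) = h z) ∧ ∀ q, f (H' q) = H q := by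
  let ψ : ULift.{w} M ≃ₜ Z := (Homeomorph.ulift).trans θ.symm
  obtain ⟨H', h1, h2⟩ := hf (ULift.{w} M)
    (h.comp ⟨ψ, ψ.continuous⟩)
    (H.comp ((⟨ψ, ψ.continuous⟩ : C(ULift.{w} M, Z)).prodMap (ContinuousMap.id _)))
    (fun z => hH (ψ z))
  refine ⟨H'.comp ((⟨ψ.symm, ψ.symm.continuous⟩ : C(Z, ULift.{w} M)).prodMap
    (ContinuousMap.id _)), ?_, ?_⟩
  · intro zz
    have := h1 (ψ.symm zz)
    simpa [ψ.apply_symm_apply] using this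
  · intro q
    have := h2 (ψ.symm q.1, q.2)
    exact (by simpa [ψ.apply_symm_apply] using this : f (H' (ψ.symm q.1, q.2)) = H q)


lemma exists_open_section_superset (X : Type u) (Y : Type v) [TopologicalSpace X]
    [TopologicalSpace Y] [CompactSpace X] [CompactSpace Y]
    [PathConnectedSpace X] [PathConnectedSpace Y]
    (hX : IsANR X) (hY : IsANR Y) (f : C(X, Y)) (hf : IsFibration f)
    (A : Set (X × Y)) (hA : HasLocalSectionPi f A) :
    ∃ V : Set (X × Y), IsOpen V ∧ A ⊆ V ∧ HasLocalSectionPi f V := by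
  classical
  haveI : Nonempty X := inferInstance
  haveI : Nonempty Y := inferInstance
  haveI := hX.1
  haveI := hY.1
  letI mX : MetricSpace X := TopologicalSpace.metrizableSpaceMetric X
  letI mY : MetricSpace Y := TopologicalSpace.metrizableSpaceMetric Y
  obtain ⟨s, hs⟩ := hA
  -- packages
  obtain ⟨κX, UX, GX, hκXiso, hUXopen, hκXU, hGX⟩ := anr_package hX
  obtain ⟨κY, UY, GY, hκYiso, hUYopen, hκYU, hGY⟩ := anr_package hY
  obtain ⟨ε₁X, hε₁X, hthickX⟩ := (isCompact_range hκXiso.continuous).exists_thickening_subset_open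
    hUXopen (by rintro _ ⟨x, rfl⟩; exact hκXU x)
  obtain ⟨ε₁Y, hε₁Y, hthickY⟩ := (isCompact_range hκYiso.continuous).exists_thickening_subset_open
    hUYopen (by rintro _ ⟨y, rfl⟩; exact hκYU y)
  set δs : ℝ := min ε₁X ε₁Y with hδsdef
  have hδs : 0 < δs := lt_min hε₁X hε₁Y
  -- uniform continuity of f
  have hfu : UniformContinuous f := CompactSpace.uniformContinuous_of_continuous f.continuous
  obtain ⟨ηf, hηf, hfmod⟩ := Metric.uniformContinuous_iff.mp hfu (δs/2) (half_pos hδs)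
  -- modulus for GX
  obtain ⟨ηG, hηG, hmodX⟩ := retract_modulus hκXiso hκXU GX hGX (min ηf (δs/2))
    (lt_min hηf (half_pos hδs))
  set εc : ℝ := min (min ηG ε₁X) (δs / 2) / 2 with hεcdef
  have hεc : 0 < εc := by positivity
  have hεcηG : εc < ηG :=
    lt_of_le_of_lt (by nlinarith [min_le_left (min ηG ε₁X) (δs/2), min_le_left ηG ε₁X] : εc ≤ ηG / 2)
      (by linarith)
  have hεcε₁X : εc < ε₁X :=
    lt_of_le_of_lt (by nlinarith [min_le_left (min ηG ε₁X) (δs/2), min_le_right ηG ε₁X] : εc ≤ ε₁X / 2)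
      (by linarith)
  have hεcδs : εc < δs / 2 :=
    lt_of_le_of_lt (by nlinarith [min_le_right (min ηG ε₁X) (δs/2)] : εc ≤ (δs/2) / 2)
      (by linarith)
  -- the witness predicate and the open set V
  set P : (X × Y) × ℝ → Prop := fun q =>
    0 < q.2 ∧ q.2 < εc ∧ (∃ a : A, dist (a : X × Y) q.1 < q.2/4) ∧
      ∀ a b : A, dist (a : X × Y) q.1 < q.2 → dist (b : X × Y) q.1 < q.2 →
        dist (s a) (s b) ≤ εc with hPdef
  set V : Set (X × Y) := ⋃ (q : {q // P q}), Metric.ball q.1.1 (q.1.2/8) with hVdef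
  have hVopen : IsOpen V := isOpen_iUnion fun q => Metric.isOpen_ball
  have hAV : A ⊆ V := by
    intro a ha
    obtain ⟨ρa, hρa, hρmod⟩ := Metric.continuous_iff.mp s.continuous ⟨a, ha⟩ (εc/2) (half_pos hεc)
    set r : ℝ := min ρa εc / 2 with hrdef
    have hr0 : 0 < r := by positivity
    have hrεc : r < εc := by
      have h1 : min ρa εc ≤ εc := min_le_right _ _
      rw [hrdef]; linarith
    have hrρa : r < ρa := by
      have h1 : min ρa εc ≤ ρa := min_le_left _ _
      rw [hrdef]; linarith
    refine Set.mem_iUnion.2 ⟨⟨(a, r), ⟨hr0, hrεc, ⟨⟨a, ha⟩, by simp [dist_self]; positivity⟩, ?_⟩⟩, ?_⟩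
    · intro a' b' h1 h2
      have hd1 : dist (s a') (s ⟨a, ha⟩) < εc/2 := by
        apply hρmod
        rw [Subtype.dist_eq]
        exact lt_trans h1 hrρa
      have hd2 : dist (s b') (s ⟨a, ha⟩) < εc/2 := by
        apply hρmod
        rw [Subtype.dist_eq]
        exact lt_trans h2 hrρa
      calc dist (s a') (s b') ≤ dist (s a') (s ⟨a, ha⟩) + dist (s ⟨a, ha⟩) (s b') :=
            dist_triangle _ _ _
        _ ≤ εc/2 + εc/2 := by rw [dist_comm (s ⟨a, ha⟩)]; exact add_le_add hd1.le hd2.le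
        _ = εc := by ring
    · exact Metric.mem_ball_self (by positivity)
  -- partition of unity on V
  set ι : Type _ := {q : (X × Y) × ℝ // P q} with hιdef
  set Ucov : ι → Set V := fun q => {v | dist (v : X × Y) q.1.1 < q.1.2/8} with hUcovdef
  have hUcovopen : ∀ q, IsOpen (Ucov q) := by
    intro q
    have : Ucov q = (fun v : V => dist (v : X × Y) q.1.1) ⁻¹' (Set.Iio (q.1.2/8)) := rfl
    rw [this]
    exact (continuous_subtype_val.dist continuous_const).isOpen_preimage _ isOpen_Iio
  have hcover : (Set.univ : Set V) ⊆ ⋃ q, Ucov q := by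
    rintro ⟨z, hz⟩ -
    obtain ⟨B, ⟨q, rfl⟩, hzB⟩ := hz
    exact Set.mem_iUnion.2 ⟨q, hzB⟩
  obtain ⟨ρ, hρsub⟩ := PartitionOfUnity.exists_isSubordinate isClosed_univ Ucov hUcovopen hcover
  -- chosen points in A
  have haq : ∀ q : ι, ∃ a : A, dist (a : X × Y) q.1.1 < q.1.2/4 := fun q => q.2.2.2.1
  choose aq haqd using haq
  -- the averaged map into C(I, L∞)
  set κE : C(unitInterval, X) → C(unitInterval, L∞) :=
    fun e => (⟨κX, hκXiso.continuous⟩ : C(X, L∞)).comp e with hκEdef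
  have hκEdist : ∀ e e', dist (κE e) (κE e') ≤ dist e e' := by
    intro e e'
    rw [ContinuousMap.dist_le dist_nonneg]
    intro t
    have : dist (κX (e t)) (κX (e' t)) = dist (e t) (e' t) := hκXiso.dist_eq _ _
    rw [hκEdef]
    simpa [this] using ContinuousMap.dist_apply_le_dist (f := e) (g := e') t
  set g₀ : V → C(unitInterval, L∞) := fun v => ∑ᶠ q, ρ q v • κE (s (aq q)) with hg₀def
  have hg₀cont : Continuous g₀ :=
    ρ.continuous_finsum_smul (fun q x _ => continuousAt_const)
  -- main pointwise estimate
  have hmain : ∀ v : V, ∃ a₀ : A, dist (a₀ : X × Y) (v : X × Y) < εc ∧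
      dist (g₀ v) (κE (s a₀)) ≤ εc := by
    intro v
    have hfin : {q : ι | ρ q v ≠ 0}.Finite := by
      have := ρ.locallyFinite.point_finite v
      simpa [Function.mem_support] using this
    set T : Finset ι := hfin.toFinset with hTdef
    have hTmem : ∀ q : ι, q ∈ T ↔ ρ q v ≠ 0 := by
      intro q; rw [hTdef, Set.Finite.mem_toFinset]; rfl
    have hsupx : (Function.support fun q => ρ q v) ⊆ ↑T := by
      intro q hq
      simpa using (hTmem q).2 hq
    have hTsum : ∑ q ∈ T, ρ q v = 1 := by
      have h1 : ∑ᶠ q, ρ q v = 1 := ρ.sum_eq_one (Set.mem_univ v)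
      rwa [finsum_eq_sum_of_support_subset _ hsupx] at h1
    have hTne : T.Nonempty := by
      by_contra h
      rw [Finset.not_nonempty_iff_eq_empty] at h
      rw [h, Finset.sum_empty] at hTsum
      exact one_ne_zero hTsum.symm
    obtain ⟨q₀, hq₀T, hq₀max⟩ := T.exists_max_image (fun q => q.1.2) hTne
    -- facts for active indices
    have hactive : ∀ q ∈ T, dist (v : X × Y) q.1.1 < q.1.2/8 := by
      intro q hq
      exact hρsub q (subset_tsupport _ ((hTmem q).1 hq))
    have hr₀pos : 0 < q₀.1.2 := q₀.2.1
    have hr₀εc : q₀.1.2 < εc := q₀.2.2.1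
    have hclose : ∀ q ∈ T, dist (aq q : X × Y) q₀.1.1 < q₀.1.2 := by
      intro q hq
      have h1 : dist (aq q : X × Y) q.1.1 < q.1.2/4 := haqd q
      have h2 : dist (v : X × Y) q.1.1 < q.1.2/8 := hactive q hq
      have h3 : dist (v : X × Y) q₀.1.1 < q₀.1.2/8 := hactive q₀ hq₀T
      have h4 : q.1.2 ≤ q₀.1.2 := hq₀max q hq
      calc dist (aq q : X × Y) q₀.1.1 ≤
          dist (aq q : X × Y) q.1.1 + dist q.1.1 (v : X × Y) + dist (v : X × Y) q₀.1.1 :=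
            dist_triangle4 _ _ _ _
        _ < q.1.2/4 + q.1.2/8 + q₀.1.2/8 := by
            rw [dist_comm q.1.1]
            exact add_lt_add (add_lt_add h1 h2) h3
        _ ≤ q₀.1.2 := by linarith
    refine ⟨aq q₀, ?_, ?_⟩
    · have h1 : dist (aq q₀ : X × Y) q₀.1.1 < q₀.1.2/4 := haqd q₀
      have h3 : dist (v : X × Y) q₀.1.1 < q₀.1.2/8 := hactive q₀ hq₀T
      calc dist (aq q₀ : X × Y) (v : X × Y) ≤
          dist (aq q₀ : X × Y) q₀.1.1 + dist q₀.1.1 (v : X × Y) := dist_triangle _ _ _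
        _ < q₀.1.2/4 + q₀.1.2/8 := by rw [dist_comm q₀.1.1]; exact add_lt_add h1 h3
        _ < εc := by linarith
    · have heq : g₀ v = ∑ q ∈ T, ρ q v • κE (s (aq q)) := by
        rw [hg₀def]
        apply finsum_eq_sum_of_support_subset
        intro q hq
        apply hsupx
        simp only [Function.mem_support] at hq ⊢
        intro h0
        rw [h0] at hq
        exact hq (by ext t; simp)
      rw [heq]
      apply convex_est T (fun q => ρ q v) (fun q _ => ρ.nonneg q v) hTsum _ _ εc
      intro q hq
      have h1 : dist (aq q : X × Y) q₀.1.1 < q₀.1.2 := hclose q hq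
      have h2 : dist (aq q₀ : X × Y) q₀.1.1 < q₀.1.2 := by
        have := haqd q₀; linarith
      exact le_trans (hκEdist _ _) (q₀.2.2.2.2 (aq q) (aq q₀) h1 h2)
  -- membership of averaged values in UX
  have hg₀mem : ∀ (v : V) (t : unitInterval), g₀ v t ∈ UX := by
    intro v t
    obtain ⟨a₀, _, hgd⟩ := hmain v
    apply hthickX
    rw [Metric.mem_thickening_iff]
    refine ⟨κX (s a₀ t), ⟨s a₀ t, rfl⟩, ?_⟩
    have h1 : dist (g₀ v t) (κE (s a₀) t) ≤ dist (g₀ v) (κE (s a₀)) :=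
      ContinuousMap.dist_apply_le_dist t
    have h2 : κE (s a₀) t = κX (s a₀ t) := rfl
    rw [h2] at h1
    exact lt_of_le_of_lt (le_trans h1 hgd) hεcε₁X
  -- the retracted map e : V → C(I, X)
  set eun : V × unitInterval → X := fun p => GX ⟨g₀ p.1 p.2, hg₀mem p.1 p.2⟩ with heundef
  have heuncont : Continuous eun := by
    apply GX.continuous.comp
    apply Continuous.subtype_mk
    exact continuous_eval.comp ((hg₀cont.comp continuous_fst).prodMk continuous_snd)
  set e : C(V, C(unitInterval, X)) := ContinuousMap.curry ⟨eun, heuncont⟩ with hedef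
  have heval : ∀ (v : V) (t : unitInterval), e v t = GX ⟨g₀ v t, hg₀mem v t⟩ := fun v t => rfl
  -- key estimate for e
  have hkey : ∀ v : V, ∃ a₀ : A, dist (a₀ : X × Y) (v : X × Y) < εc ∧
      ∀ t, dist (e v t) (s a₀ t) < min ηf (δs/2) := by
    intro v
    obtain ⟨a₀, hd, hgd⟩ := hmain v
    refine ⟨a₀, hd, fun t => ?_⟩
    rw [heval]
    apply hmodX
    have h1 : dist (g₀ v t) (κE (s a₀) t) ≤ dist (g₀ v) (κE (s a₀)) :=
      ContinuousMap.dist_apply_le_dist t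
    exact lt_of_le_of_lt (le_trans h1 hgd) hεcηG
  -- endpoint estimates
  have hEstX : ∀ v : V, dist (e v 0) (v : X × Y).1 < δs := by
    intro v
    obtain ⟨a₀, hd, hmod⟩ := hkey v
    have h1 : dist (e v 0) (s a₀ 0) < δs/2 := lt_of_lt_of_le (hmod 0) (min_le_right _ _)
    have h2 : s a₀ 0 = (a₀ : X × Y).1 := congrArg Prod.fst (hs a₀)
    have h3 : dist ((a₀ : X × Y).1) ((v : X × Y).1) ≤ dist (a₀ : X × Y) (v : X × Y) := by
      rw [Prod.dist_eq]; exact le_max_left _ _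
    calc dist (e v 0) (v : X × Y).1 ≤ dist (e v 0) (s a₀ 0) + dist (s a₀ 0) (v : X × Y).1 :=
          dist_triangle _ _ _
      _ < δs/2 + δs/2 := by
          apply add_lt_add h1
          rw [h2]
          exact lt_of_le_of_lt h3 (lt_trans hd hεcδs)
      _ = δs := by ring
  have hEstY : ∀ v : V, dist (f (e v 1)) (v : X × Y).2 < δs := by
    intro v
    obtain ⟨a₀, hd, hmod⟩ := hkey v
    have h1 : dist (e v 1) (s a₀ 1) < ηf := lt_of_lt_of_le (hmod 1) (min_le_left _ _)
    have h2 : f (s a₀ 1) = (a₀ : X × Y).2 := congrArg Prod.snd (hs a₀)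
    have h3 : dist ((a₀ : X × Y).2) ((v : X × Y).2) ≤ dist (a₀ : X × Y) (v : X × Y) := by
      rw [Prod.dist_eq]; exact le_max_right _ _
    calc dist (f (e v 1)) (v : X × Y).2 ≤
        dist (f (e v 1)) (f (s a₀ 1)) + dist (f (s a₀ 1)) (v : X × Y).2 := dist_triangle _ _ _
      _ < δs/2 + δs/2 := by
          apply add_lt_add (hfmod h1)
          rw [h2]
          exact lt_of_le_of_lt h3 (lt_trans hd hεcδs)
      _ = δs := by ring
  have hδsε₁Y : δs ≤ ε₁Y := min_le_right _ _
  have hδsε₁X : δs ≤ ε₁X := min_le_left _ _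
  -- the map to be corrected over Y and the correcting homotopy
  set hmap : C(V, X) := ⟨fun v => e v 1,
    (continuous_eval_const 1).comp e.continuous⟩ with hhmapdef
  set HYfun : V × unitInterval → L∞ := fun p =>
    (1 - (p.2 : ℝ)) • κY (f (e p.1 1)) + (p.2 : ℝ) • κY ((p.1 : X × Y).2) with hHYfundef
  have hHYmem : ∀ p, HYfun p ∈ UY := by
    intro p
    apply hthickY
    rw [Metric.mem_thickening_iff]
    refine ⟨κY (f (e p.1 1)), ⟨_, rfl⟩, ?_⟩
    have halg : HYfun p - κY (f (e p.1 1)) =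
        (p.2 : ℝ) • (κY ((p.1 : X × Y).2) - κY (f (e p.1 1))) := by
      simp only [hHYfundef]
      module
    rw [dist_eq_norm, halg, norm_smul, Real.norm_eq_abs, abs_of_nonneg p.2.2.1]
    have h1 : ‖κY ((p.1 : X × Y).2) - κY (f (e p.1 1))‖ = dist (f (e p.1 1)) ((p.1 : X × Y).2) := by
      rw [← dist_eq_norm, dist_comm]
      exact hκYiso.dist_eq _ _
    rw [h1]
    calc (p.2 : ℝ) * dist (f (e p.1 1)) ((p.1 : X × Y).2) ≤
        1 * dist (f (e p.1 1)) ((p.1 : X × Y).2) :=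
          mul_le_mul_of_nonneg_right p.2.2.2 dist_nonneg
      _ = dist (f (e p.1 1)) ((p.1 : X × Y).2) := one_mul _
      _ < ε₁Y := lt_of_lt_of_le (hEstY p.1) hδsε₁Y
  have he1cont : Continuous fun p : V × unitInterval => f (e p.1 1) :=
    f.continuous.comp ((continuous_eval_const 1).comp
      (e.continuous.comp continuous_fst))
  have hHYcont : Continuous HYfun := by
    apply Continuous.add
    · exact (continuous_const.sub (continuous_subtype_val.comp continuous_snd)).smul
        (hκYiso.continuous.comp he1cont)
    · exact (continuous_subtype_val.comp continuous_snd).smul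
        (hκYiso.continuous.comp (continuous_snd.comp
          (continuous_subtype_val.comp continuous_fst)))
  set HY : C(V × unitInterval, Y) :=
    ⟨fun p => GY ⟨HYfun p, hHYmem p⟩, GY.continuous.comp (hHYcont.subtype_mk _)⟩ with hHYdef
  have hHY0 : ∀ v : V, HY (v, 0) = f (hmap v) := by
    intro v
    have hpt : HYfun (v, 0) = κY (f (e v 1)) := by
      simp [hHYfundef]
    calc HY (v, 0) = GY ⟨HYfun (v, 0), hHYmem (v, 0)⟩ := rfl
      _ = GY ⟨κY (f (e v 1)), hκYU _⟩ := by congr 1; exact Subtype.ext hpt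
      _ = f (e v 1) := hGY _ _
  have hHY1 : ∀ v : V, HY (v, 1) = (v : X × Y).2 := by
    intro v
    have hpt : HYfun (v, 1) = κY ((v : X × Y).2) := by
      simp [hHYfundef]
    calc HY (v, 1) = GY ⟨HYfun (v, 1), hHYmem (v, 1)⟩ := rfl
      _ = GY ⟨κY ((v : X × Y).2), hκYU _⟩ := by congr 1; exact Subtype.ext hpt
      _ = (v : X × Y).2 := hGY _ _
  -- homotopy lifting, transported through an embedding into ℝ^ℕ
  obtain ⟨Φ, hΦc, hΦi⟩ := compact_embed_pi (X × Y)
  have hΦemb : Topology.IsEmbedding Φ := (hΦc.isClosedEmbedding hΦi).toIsEmbedding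
  have hres : Topology.IsEmbedding (fun v : V => Φ (v : X × Y)) :=
    hΦemb.comp Topology.IsEmbedding.subtypeVal
  obtain ⟨H', hH'0, hH'p⟩ := hlp_transfer f hf hres.toHomeomorph hmap HY hHY0
  -- assembling the section as a triple concatenation
  set projI : ℝ → unitInterval := fun t => Set.projIcc 0 1 zero_le_one t with hprojIdef
  have hprojIcont : Continuous projI := continuous_projIcc
  have hprojI0 : projI 0 = 0 := by
    rw [hprojIdef]
    exact Subtype.ext (by simp [Set.projIcc])
  have hprojI1 : projI 1 = 1 := by
    rw [hprojIdef]
    exact Subtype.ext (by simp [Set.projIcc])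
  set segX : V × ℝ → L∞ := fun p =>
    (1 - (projI (3 * p.2) : ℝ)) • κX ((p.1 : X × Y).1) +
      (projI (3 * p.2) : ℝ) • κX (e p.1 0) with hsegXdef
  have hsegXmem : ∀ p, segX p ∈ UX := by
    intro p
    apply hthickX
    rw [Metric.mem_thickening_iff]
    refine ⟨κX ((p.1 : X × Y).1), ⟨_, rfl⟩, ?_⟩
    have halg : segX p - κX ((p.1 : X × Y).1) =
        (projI (3 * p.2) : ℝ) • (κX (e p.1 0) - κX ((p.1 : X × Y).1)) := by
      simp only [hsegXdef]
      module
    rw [dist_eq_norm, halg, norm_smul, Real.norm_eq_abs, abs_of_nonneg (projI (3 * p.2)).2.1]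
    have h1 : ‖κX (e p.1 0) - κX ((p.1 : X × Y).1)‖ = dist (e p.1 0) ((p.1 : X × Y).1) := by
      rw [← dist_eq_norm]
      exact hκXiso.dist_eq _ _
    rw [h1]
    calc (projI (3 * p.2) : ℝ) * dist (e p.1 0) ((p.1 : X × Y).1) ≤
        1 * dist (e p.1 0) ((p.1 : X × Y).1) :=
          mul_le_mul_of_nonneg_right (projI (3 * p.2)).2.2 dist_nonneg
      _ = dist (e p.1 0) ((p.1 : X × Y).1) := one_mul _
      _ < ε₁X := lt_of_lt_of_le (hEstX p.1) hδsε₁X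
  have hsegXcont : Continuous segX := by
    have hc1 : Continuous fun p : V × ℝ => (projI (3 * p.2) : ℝ) :=
      continuous_subtype_val.comp (hprojIcont.comp (continuous_const.mul continuous_snd))
    apply Continuous.add
    · exact (continuous_const.sub hc1).smul (hκXiso.continuous.comp
        (continuous_fst.comp (continuous_subtype_val.comp continuous_fst)))
    · exact hc1.smul (hκXiso.continuous.comp ((continuous_eval_const 0).comp
        (e.continuous.comp continuous_fst)))
  set B1 : V × ℝ → X := fun p => GX ⟨segX p, hsegXmem p⟩ with hB1def
  set B2 : V × ℝ → X := fun p => e p.1 (projI (3 * p.2 - 1)) with hB2def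
  set B3 : V × ℝ → X := fun p => H' (p.1, projI (3 * p.2 - 2)) with hB3def
  have hB1cont : Continuous B1 := GX.continuous.comp (hsegXcont.subtype_mk _)
  have hB2cont : Continuous B2 := by
    have : Continuous fun p : V × ℝ => (e p.1, projI (3 * p.2 - 1)) :=
      (e.continuous.comp continuous_fst).prodMk
        (hprojIcont.comp ((continuous_const.mul continuous_snd).sub continuous_const))
    exact continuous_eval.comp this
  have hB3cont : Continuous B3 := H'.continuous.comp (continuous_fst.prodMk
    (hprojIcont.comp ((continuous_const.mul continuous_snd).sub continuous_const)))
  have hB1eq : ∀ p : V × ℝ, 3 * p.2 = 1 → B1 p = e p.1 0 := by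
    intro p hp
    have hseg : segX p = κX (e p.1 0) := by
      simp only [hsegXdef, hp, hprojI1]
      simp
    calc B1 p = GX ⟨segX p, hsegXmem p⟩ := rfl
      _ = GX ⟨κX (e p.1 0), hκXU _⟩ := by congr 1; exact Subtype.ext hseg
      _ = e p.1 0 := hGX _ _
  have hB2at1 : ∀ p : V × ℝ, 3 * p.2 = 1 → B2 p = e p.1 0 := by
    intro p hp
    rw [hB2def]
    simp only [hp]
    norm_num [hprojI0]
  have hB2at2 : ∀ p : V × ℝ, 3 * p.2 = 2 → B2 p = e p.1 1 := by
    intro p hp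
    rw [hB2def]
    simp only [hp]
    norm_num [hprojI1]
  have hB3at2 : ∀ p : V × ℝ, 3 * p.2 = 2 → B3 p = e p.1 1 := by
    intro p hp
    rw [hB3def]
    simp only [hp]
    norm_num [hprojI0]
    exact hH'0 p.1
  set σr : V × ℝ → X := fun p =>
    if 3 * p.2 ≤ 1 then B1 p else if 3 * p.2 ≤ 2 then B2 p else B3 p with hσrdef
  have hinner : Continuous fun p : V × ℝ => if 3 * p.2 ≤ 2 then B2 p else B3 p := by
    apply Continuous.if_le hB2cont hB3cont (continuous_const.mul continuous_snd)
      continuous_const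
    intro p hp
    rw [hB2at2 p hp, hB3at2 p hp]
  have hσrcont : Continuous σr := by
    apply Continuous.if_le hB1cont hinner (continuous_const.mul continuous_snd)
      continuous_const
    intro p hp
    rw [if_pos (by rw [show 3 * p.2 = 1 from hp]; norm_num : 3 * p.2 ≤ 2), hB1eq p hp, hB2at1 p hp]
  set σI : C(V × unitInterval, X) :=
    ⟨fun p => σr (p.1, (p.2 : ℝ)),
      hσrcont.comp (continuous_fst.prodMk (continuous_subtype_val.comp continuous_snd))⟩
    with hσIdef
  refine ⟨V, hVopen, hAV, σI.curry, ?_⟩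
  intro v
  have hstart : σI.curry v 0 = (v : X × Y).1 := by
    have h0 : σI.curry v 0 = σr (v, ((0 : unitInterval) : ℝ)) := rfl
    rw [h0]
    have hc : ((0 : unitInterval) : ℝ) = 0 := rfl
    rw [hc]
    have hcond : 3 * (0:ℝ) ≤ 1 := by norm_num
    rw [hσrdef]
    simp only [hcond, if_true]
    have hseg : segX (v, (0:ℝ)) = κX ((v : X × Y).1) := by
      simp only [hsegXdef]
      norm_num [hprojI0]
    calc B1 (v, (0:ℝ)) = GX ⟨segX (v, (0:ℝ)), hsegXmem _⟩ := rfl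
      _ = GX ⟨κX ((v : X × Y).1), hκXU _⟩ := by congr 1; exact Subtype.ext hseg
      _ = (v : X × Y).1 := hGX _ _
  have hend : f (σI.curry v 1) = (v : X × Y).2 := by
    have h1 : σI.curry v 1 = σr (v, ((1 : unitInterval) : ℝ)) := rfl
    rw [h1]
    have hc : ((1 : unitInterval) : ℝ) = 1 := rfl
    rw [hc]
    have hcond1 : ¬ (3 * (1:ℝ) ≤ 1) := by norm_num
    have hcond2 : ¬ (3 * (1:ℝ) ≤ 2) := by norm_num
    rw [hσrdef]
    simp only [hcond1, hcond2, if_false]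
    have hB3v : B3 (v, (1:ℝ)) = H' (v, 1) := by
      rw [hB3def]
      norm_num [hprojI1]
    rw [hB3v, hH'p (v, 1), hHY1 v]
  exact Prod.ext hstart hend

/-- (Pavešić) For a fibration `f : X → Y` between compact ANR spaces (a continuous
surjection between path-connected spaces), `tc(f)` equals the least `n` such that
`X × Y` is covered by `n+1` arbitrary subsets each admitting a continuous local
section of `π_f`. -/
theorem tcPav_eq_generalized (X : Type u) (Y : Type v) [TopologicalSpace X]
    [TopologicalSpace Y] [CompactSpace X] [CompactSpace Y]
    [PathConnectedSpace X] [PathConnectedSpace Y]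
    (hX : IsANR X) (hY : IsANR Y) (f : C(X, Y)) (hf : IsFibration f)
    (hsurj : Function.Surjective f) :
    tcPav f = sInf {m : ℕ∞ | ∃ n : ℕ, m = n ∧ ∃ A : Fin (n + 1) → Set (X × Y),
      (⋃ i, A i) = Set.univ ∧ ∀ i, HasLocalSectionPi f (A i)} := by
  refine le_antisymm ?_ ?_
  · -- hard direction: tcPav f ≤ generalized
    apply le_sInf
    rintro m ⟨n, rfl, A, hcover, hsec⟩
    -- replace each A i by an open superset with a section
    choose V hVopen hAV hVsec using fun i =>
      exists_open_section_superset X Y hX hY f hf (A i) (hsec i)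
    -- build the nested open filtration U k = ⋃_{j < k} V j
    apply sInf_le
    refine ⟨n, rfl, fun k => ⋃ j : Fin (n+1), ⋃ (_ : (j : ℕ) < (k : ℕ)), V j,
      ?_, ?_, ?_, ?_, ?_⟩
    · intro k
      exact isOpen_iUnion fun j => isOpen_iUnion fun _ => hVopen j
    · simp
    · rw [Set.eq_univ_iff_forall]
      intro z
      have : z ∈ ⋃ i, A i := by rw [hcover]; trivial
      obtain ⟨_, ⟨j, rfl⟩, hz⟩ := this
      refine Set.mem_iUnion.2 ⟨j, Set.mem_iUnion.2 ⟨?_, hAV j hz⟩⟩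
      simpa [Fin.last] using j.isLt
    · intro i k hik
      refine Set.iUnion_mono fun j => Set.iUnion_subset fun hj => ?_
      exact fun x hx => Set.mem_iUnion.2 ⟨lt_of_lt_of_le hj (Fin.le_def.1 hik), hx⟩
    · intro i
      refine (hVsec i).mono ?_
      rintro z ⟨hz1, hz2⟩
      obtain ⟨_, ⟨j, rfl⟩, _, ⟨hj, rfl⟩, hzj⟩ := hz1
      have hji : (j : ℕ) ≤ (i : ℕ) := by
        simp only [Fin.val_succ] at hj; omega
      rcases eq_or_lt_of_le hji with h | h
      · rwa [← Fin.val_injective h]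
      · exact absurd (Set.mem_iUnion.2 ⟨j, Set.mem_iUnion.2 ⟨by simpa using h, hzj⟩⟩) hz2
  · -- easy direction
    apply sInf_le_sInf
    rintro m ⟨n, rfl, U, hopen, h0, hlast, hmono, hsec⟩
    refine ⟨n, rfl, fun i => U i.succ \ U i.castSucc, ?_, hsec⟩
    ext z
    simp only [Set.mem_iUnion, Set.mem_univ, iff_true]
    by_contra hz
    push_neg at hz
    have key : ∀ k : Fin (n+2), z ∉ U k := by
      intro k
      induction k using Fin.induction with
      | zero => rw [h0]; exact Set.notMem_empty z
      | succ i ih => exact fun h => hz i ⟨h, ih⟩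
    exact key (Fin.last (n+1)) (hlast ▸ Set.mem_univ z)
end
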